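/- Fix d ≥ 1, T ≥ 1, reals η > 0, L ≥ 0, F ≥ 0, integers P ≥ 1, s ≥ 0, and x* ∈ ℝ^d. On a probability space, let γ_1, …, γ_T be i.i.d. real random variables with 0 ≤ γ_t ≤ (2s+1)P a.s., mean μ_γ, and variance σ_γ. For each t let f_t : ℝ^d → ℝ be convex and differentiable with ‖∇f_t(x)‖₂ ≤ L everywhere; let η_t = η/√t; let (x_t) and (x̃_t) be ℝ^d-valued random sequences with x_{t+1} = x_t − η_t ∇f_t(x̃_t), x̃_t = x_t + ū_t c_t for a random scalar 0 ≤ ū_t ≤ η L/√t and random vector c_t with ‖c_t‖₂ ≤ γ_t a.s., and ½‖x* − x_t‖₂² ≤ F² a.s. for all t = 1,…,T+1. Let R[X] := ∑_{t=1}^T ( f_t(x̃_t) − f_t(x*) ) and η̄_T := η² L⁴ (ln T + 1)/T. Then for every τ > 0: P[ R[X]/T − (1/√T)( η L² + F²/η + 2 η L² μ_γ ) ≥ τ ] ≤ exp( − T τ² / ( 2 η̄_T σ_γ + (2/3) η L² (2s+1) P τ ) ). -/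

import Mathlib

open Real MeasureTheory ProbabilityTheory


section AuxSSP
open Finset

-- sum of 1/sqrt t
lemma aux_sum_inv_sqrt (T : ℕ) : ∑ t ∈ Finset.Icc 1 T, 1 / Real.sqrt t ≤ 2 * Real.sqrt T := by
  induction T with
  | zero => simp
  | succ n ih =>
    rw [Finset.sum_Icc_succ_top (by omega : 1 ≤ n + 1)]
    have h1 : Real.sqrt n ≤ Real.sqrt (n+1) := by
      apply Real.sqrt_le_sqrt; push_cast; linarith
    have h2 : (0:ℝ) < Real.sqrt (n+1) := by
      apply Real.sqrt_pos.2; push_cast; linarith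
    have key : 1 / Real.sqrt (n+1) ≤ 2 * (Real.sqrt (n+1) - Real.sqrt n) := by
      rw [div_le_iff₀ h2]
      have : Real.sqrt n * Real.sqrt n ≤ Real.sqrt (n+1) * Real.sqrt (n+1) := by
        nlinarith [Real.sqrt_nonneg n]
      have hsq : Real.sqrt ((n:ℝ)+1) * Real.sqrt ((n:ℝ)+1) = (n:ℝ)+1 :=
        Real.mul_self_sqrt (by positivity)
      have hsq2 : Real.sqrt (n:ℝ) * Real.sqrt (n:ℝ) = (n:ℝ) :=
        Real.mul_self_sqrt (by positivity)
      nlinarith [Real.sqrt_nonneg n]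
    push_cast
    push_cast at ih
    linarith

-- harmonic sum
lemma aux_sum_inv (T : ℕ) (hT : 1 ≤ T) :
    ∑ t ∈ Finset.Icc 1 T, 1 / (t:ℝ) ≤ Real.log T + 1 := by
  induction T with
  | zero => omega
  | succ n ih =>
    rcases Nat.eq_or_lt_of_le hT with h | h
    · simp [← h]
    · have hn : 1 ≤ n := by omega
      have ihn := ih hn
      rw [Finset.sum_Icc_succ_top (by omega : 1 ≤ n + 1)]
      have hlog : 1 / ((n:ℝ)+1) ≤ Real.log ((n:ℝ)+1) - Real.log n := by
        have hn0 : (0:ℝ) < n := by exact_mod_cast hn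
        rw [← Real.log_div (by positivity) (by positivity)]
        have hexp : Real.exp (1/((n:ℝ)+1)) ≤ ((n:ℝ)+1)/n := by
          have h1 : 1/((n:ℝ)+1) < 1 := by
            rw [div_lt_one (by positivity)]; linarith
          have := Real.add_one_le_exp (-(1/((n:ℝ)+1)))
          have h2 : (0:ℝ) < 1 - 1/((n:ℝ)+1) := by linarith
          have h3 : Real.exp (1/((n:ℝ)+1)) ≤ 1/(1 - 1/((n:ℝ)+1)) := by
            rw [le_div_iff₀ h2]
            have h4 := Real.exp_pos (1/((n:ℝ)+1))
            calc Real.exp (1/((n:ℝ)+1)) * (1 - 1/((n:ℝ)+1))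
                ≤ Real.exp (1/((n:ℝ)+1)) * Real.exp (-(1/((n:ℝ)+1))) := by nlinarith
              _ = 1 := by rw [← Real.exp_add]; simp
          refine h3.trans (le_of_eq ?_)
          field_simp
          rw [add_sub_cancel_right, div_self hn0.ne']
        calc 1/((n:ℝ)+1) = Real.log (Real.exp (1/((n:ℝ)+1))) := (Real.log_exp _).symm
          _ ≤ Real.log (((n:ℝ)+1)/n) := Real.log_le_log (Real.exp_pos _) hexp
      push_cast
      push_cast at ihn
      linarith

-- exp bound for nonpositive
lemma aux_exp_neg (u : ℝ) (hu : u ≤ 0) : Real.exp u ≤ 1 + u + u^2/2 := by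
  have hmono : Antitone (fun u : ℝ => 1 + u + u^2/2 - Real.exp u) := by
    have hd : ∀ x : ℝ, HasDerivAt (fun u : ℝ => 1 + u + u^2/2 - Real.exp u)
        (1 + x - Real.exp x) x := by
      intro x
      have h1 : HasDerivAt (fun u : ℝ => 1 + u) 1 x := by
        simpa using (hasDerivAt_id x).const_add 1
      have h2 : HasDerivAt (fun u : ℝ => u^2/2) x x := by
        simpa using (hasDerivAt_pow 2 x).div_const 2
      have h3 := Real.hasDerivAt_exp x
      exact (h1.add h2).sub h3
    apply antitone_of_deriv_nonpos
    · exact fun x => ((hd x).differentiableAt)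
    · intro x
      rw [(hd x).deriv]
      have := Real.add_one_le_exp x
      linarith
  have := hmono hu
  simp at this
  linarith

lemma aux_exp_pos (u : ℝ) (h0 : 0 ≤ u) (h3 : u < 3) :
    Real.exp u ≤ 1 + u + u^2/(2*(1-u/3)) := by
  -- step 1 : 0 ≤ 1 - (1-x) e^x  on [0,∞)
  have hd1 : ∀ x : ℝ, HasDerivAt (fun x : ℝ => 1 - (1-x)*Real.exp x) (x * Real.exp x) x := by
    intro x
    have h1 : HasDerivAt (fun x : ℝ => (1-x)) (-1) x := by
      simpa using (hasDerivAt_id x).const_sub 1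
    have h2 := (h1.mul (Real.hasDerivAt_exp x)).const_sub 1
    exact h2.congr_deriv (by ring)
  have mono1 : MonotoneOn (fun x : ℝ => 1 - (1-x)*Real.exp x) (Set.Ici 0) := by
    apply monotoneOn_of_deriv_nonneg (convex_Ici 0)
    · exact (Continuous.continuousOn (by continuity))
    · intro x _
      exact ((hd1 x).differentiableAt).differentiableWithinAt
    · intro x hx
      rw [(hd1 x).deriv]
      rw [interior_Ici] at hx
      have := Real.exp_pos x
      have : (0:ℝ) < x := hx
      positivity
  have step1 : ∀ x : ℝ, 0 ≤ x → 0 ≤ 1 - (1-x)*Real.exp x := by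
    intro x hx
    have := mono1 (Set.self_mem_Ici) (by exact hx : x ∈ Set.Ici 0) hx
    simpa using this
  -- step 2 : 0 ≤ 2 + x - (2-x) e^x on [0,∞)
  have hd2 : ∀ x : ℝ, HasDerivAt (fun x : ℝ => 2 + x - (2-x)*Real.exp x)
      (1 - (1-x)*Real.exp x) x := by
    intro x
    have h1 : HasDerivAt (fun x : ℝ => (2-x)) (-1) x := by
      simpa using (hasDerivAt_id x).const_sub 2
    have h2 : HasDerivAt (fun x : ℝ => 2 + x) 1 x := by
      simpa using (hasDerivAt_id x).const_add 2
    have h3 := h2.sub (h1.mul (Real.hasDerivAt_exp x))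
    exact h3.congr_deriv (by ring)
  have mono2 : MonotoneOn (fun x : ℝ => 2 + x - (2-x)*Real.exp x) (Set.Ici 0) := by
    apply monotoneOn_of_deriv_nonneg (convex_Ici 0)
    · exact (Continuous.continuousOn (by continuity))
    · intro x _
      exact ((hd2 x).differentiableAt).differentiableWithinAt
    · intro x hx
      rw [(hd2 x).deriv, interior_Ici] at *
      exact step1 x (le_of_lt hx)
  have step2 : ∀ x : ℝ, 0 ≤ x → 0 ≤ 2 + x - (2-x)*Real.exp x := by
    intro x hx
    have := mono2 (Set.self_mem_Ici) (by exact hx : x ∈ Set.Ici 0) hx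
    simpa using this
  -- step 3 : g(u) = (1-u/3)(1+u)+u²/2-(1-u/3)e^u ≥ 0 on [0,∞)
  have hd3 : ∀ x : ℝ, HasDerivAt
      (fun x : ℝ => (1-x/3)*(1+x) + x^2/2 - (1-x/3)*Real.exp x)
      ((2 + x - (2-x)*Real.exp x)/3) x := by
    intro x
    have h1 : HasDerivAt (fun x : ℝ => (1-x/3)) (-(1/3)) x := by
      simpa using ((hasDerivAt_id x).div_const 3).const_sub 1
    have h2 : HasDerivAt (fun x : ℝ => (1+x)) 1 x := by
      simpa using (hasDerivAt_id x).const_add 1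
    have h4 : HasDerivAt (fun x : ℝ => x^2/2) x x := by
      simpa using (hasDerivAt_pow 2 x).div_const 2
    have h5 := ((h1.mul h2).add h4).sub (h1.mul (Real.hasDerivAt_exp x))
    exact h5.congr_deriv (by ring)
  have mono3 : MonotoneOn
      (fun x : ℝ => (1-x/3)*(1+x) + x^2/2 - (1-x/3)*Real.exp x) (Set.Ici 0) := by
    apply monotoneOn_of_deriv_nonneg (convex_Ici 0)
    · exact (Continuous.continuousOn (by continuity))
    · intro x _
      exact ((hd3 x).differentiableAt).differentiableWithinAt
    · intro x hx
      rw [(hd3 x).deriv, interior_Ici] at *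
      have := step2 x (le_of_lt hx)
      linarith
  have step3 : 0 ≤ (1-u/3)*(1+u) + u^2/2 - (1-u/3)*Real.exp u := by
    have := mono3 (Set.self_mem_Ici) (by exact h0 : u ∈ Set.Ici 0) h0
    simpa using this
  -- conclude
  have hc : (0:ℝ) < 1 - u/3 := by linarith
  have hne : (1 - u/3) ≠ 0 := ne_of_gt hc
  rw [← sub_nonneg]
  have expand : 1 + u + u^2/(2*(1-u/3)) - Real.exp u
      = ((1-u/3)*(1+u) + u^2/2 - (1-u/3)*Real.exp u)/(1-u/3) := by
    rw [sub_div, add_div, mul_div_cancel_left₀ _ hne, mul_div_cancel_left₀ _ hne, div_div]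
  rw [expand]
  exact div_nonneg step3 hc.le


lemma aux_mgf_bound {Ω : Type*} [MeasureSpace Ω] [IsProbabilityMeasure (ℙ : Measure Ω)]
    (X : Ω → ℝ) (hX : Measurable X) (M lam : ℝ) (hM : 0 ≤ M)
    (hb : ∀ᵐ ω ∂ℙ, |X ω| ≤ M) (hmean : ∫ ω, X ω ∂ℙ = 0)
    (hlam : 0 ≤ lam) (hlM : lam * M < 3) :
    mgf X ℙ lam ≤ Real.exp (lam^2 * (∫ ω, (X ω)^2 ∂ℙ) / (2*(1 - lam*M/3))) := by
  have hc : 0 < 1 - lam*M/3 := by linarith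
  set K : ℝ := 1/(2*(1 - lam*M/3)) with hKdef
  have hK2 : (0:ℝ) < 2*(1 - lam*M/3) := by linarith
  have hKpos : 0 < K := by positivity
  have hK : 1/2 ≤ K := by
    rw [hKdef]
    have hlMnn : 0 ≤ lam * M := mul_nonneg hlam hM
    apply one_div_le_one_div_of_le hK2
    linarith
  -- pointwise bound
  have hpt : ∀ᵐ ω ∂ℙ, Real.exp (lam * X ω) ≤ 1 + lam * X ω + (K*lam^2) * (X ω)^2 := by
    filter_upwards [hb] with ω hω
    have hre : (K*lam^2) * (X ω)^2 = K * (lam * X ω)^2 := by ring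
    rw [hre]
    rcases le_or_gt (lam * X ω) 0 with h | h
    · have h1 := aux_exp_neg _ h
      nlinarith [sq_nonneg (lam * X ω)]
    · have hub : lam * X ω ≤ lam * M :=
        (mul_le_mul_of_nonneg_left ((le_abs_self _).trans hω) hlam)
      have h1 := aux_exp_pos _ h.le (lt_of_le_of_lt hub hlM)
      have hcu : 0 < 1 - (lam * X ω)/3 := by linarith
      have h2 : (lam * X ω)^2/(2*(1 - (lam * X ω)/3)) ≤ K * (lam * X ω)^2 := by
        have : K * (lam * X ω)^2 = (lam * X ω)^2 / (2*(1 - lam*M/3)) := by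
          rw [hKdef]; ring
        rw [this]
        apply div_le_div_of_nonneg_left (sq_nonneg _) hK2
        linarith
      linarith
  -- integrability
  have hXint : Integrable X ℙ := by
    refine Integrable.mono' (integrable_const M) hX.aestronglyMeasurable ?_
    filter_upwards [hb] with ω h using by simpa using h
  have hX2int : Integrable (fun ω => (X ω)^2) ℙ := by
    refine Integrable.mono' (integrable_const (M^2)) ((hX.pow_const 2).aestronglyMeasurable) ?_
    filter_upwards [hb] with ω h
    have : |(X ω)^2| = |X ω|^2 := by rw [abs_pow, sq_abs, ← sq_abs]
    rw [Real.norm_eq_abs, this]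
    exact pow_le_pow_left₀ (abs_nonneg _) h 2
  have hexpint : Integrable (fun ω => Real.exp (lam * X ω)) ℙ := by
    refine Integrable.mono' (integrable_const (Real.exp (lam*M)))
      ((hX.const_mul lam).exp).aestronglyMeasurable ?_
    filter_upwards [hb] with ω h
    rw [Real.norm_eq_abs, abs_of_pos (Real.exp_pos _)]
    exact Real.exp_le_exp.2 (mul_le_mul_of_nonneg_left ((le_abs_self _).trans h) hlam)
  have hRHSint : Integrable (fun ω => 1 + lam * X ω + (K*lam^2) * (X ω)^2) ℙ :=
    ((integrable_const 1).add (hXint.const_mul lam)).add (hX2int.const_mul (K*lam^2))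
  have hint_le := integral_mono_ae hexpint hRHSint hpt
  have hval : ∫ ω, (1 + lam * X ω + (K*lam^2) * (X ω)^2) ∂ℙ
      = 1 + (K*lam^2) * ∫ ω, (X ω)^2 ∂ℙ := by
    have hint1 : Integrable (fun ω => 1 + lam * X ω) ℙ :=
      (integrable_const 1).add (hXint.const_mul lam)
    have hint2 : Integrable (fun ω => (K*lam^2) * (X ω)^2) ℙ := hX2int.const_mul _
    rw [integral_add hint1 hint2, integral_add (integrable_const 1) (hXint.const_mul lam),
      integral_const_mul, integral_const_mul, hmean]
    simp
  have hv : 0 ≤ ∫ ω, (X ω)^2 ∂ℙ := integral_nonneg (fun ω => sq_nonneg _)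
  calc mgf X ℙ lam = ∫ ω, Real.exp (lam * X ω) ∂ℙ := rfl
    _ ≤ 1 + (K*lam^2) * ∫ ω, (X ω)^2 ∂ℙ := by rw [← hval]; exact hint_le
    _ ≤ Real.exp ((K*lam^2) * ∫ ω, (X ω)^2 ∂ℙ) := by
        have := Real.add_one_le_exp ((K*lam^2) * ∫ ω, (X ω)^2 ∂ℙ)
        linarith
    _ = Real.exp (lam^2 * (∫ ω, (X ω)^2 ∂ℙ) / (2*(1 - lam*M/3))) := by
        congr 1
        rw [hKdef]; ring

lemma aux_bernstein {Ω : Type*} [MeasureSpace Ω] [IsProbabilityMeasure (ℙ : Measure Ω)]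
    {n : ℕ} (Z : Fin n → Ω → ℝ) (hZmeas : ∀ i, Measurable (Z i))
    (hZindep : iIndepFun Z ℙ)
    (M V ε : ℝ) (hM : 0 < M) (hε : 0 < ε) (hV : 0 ≤ V)
    (hb : ∀ i, ∀ᵐ ω ∂ℙ, |Z i ω| ≤ M)
    (hmean : ∀ i, ∫ ω, Z i ω ∂ℙ = 0)
    (hvar : ∑ i, ∫ ω, (Z i ω)^2 ∂ℙ ≤ V) :
    ℙ {ω | ε ≤ ∑ i, Z i ω} ≤
      ENNReal.ofReal (Real.exp (-(ε^2) / (2*V + (2/3)*M*ε))) := by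
  rcases eq_or_lt_of_le hV with hV0 | hVpos
  · -- V = 0 : all Z i vanish a.e.
    have hzero : ∀ i, (fun ω => Z i ω) =ᵐ[ℙ] (fun _ => (0:ℝ)) := by
      intro i
      have hnn : ∀ j : Fin n, 0 ≤ ∫ ω, (Z j ω)^2 ∂ℙ :=
        fun j => integral_nonneg fun ω => sq_nonneg _
      have hiz : ∫ ω, (Z i ω)^2 ∂ℙ = 0 := by
        have hle : ∫ ω, (Z i ω)^2 ∂ℙ ≤ 0 := by
          have := Finset.single_le_sum (f := fun j => ∫ ω, (Z j ω)^2 ∂ℙ)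
            (fun j _ => hnn j) (Finset.mem_univ i)
          rw [← hV0] at hvar
          linarith
        exact le_antisymm hle (hnn i)
      have hint : Integrable (fun ω => (Z i ω)^2) ℙ := by
        refine Integrable.mono' (integrable_const (M^2))
          (((hZmeas i).pow_const 2).aestronglyMeasurable) ?_
        filter_upwards [hb i] with ω h
        have : |(Z i ω)^2| = |Z i ω|^2 := by rw [abs_pow, sq_abs, ← sq_abs]
        rw [Real.norm_eq_abs, this]
        exact pow_le_pow_left₀ (abs_nonneg _) h 2
      have := (integral_eq_zero_iff_of_nonneg (fun ω => sq_nonneg (Z i ω)) hint).1 hiz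
      filter_upwards [this] with ω h
      exact pow_eq_zero_iff (n := 2) (by norm_num) |>.1 h
    have hsum0 : ∀ᵐ ω ∂ℙ, ∑ i, Z i ω = 0 := by
      have := MeasureTheory.ae_all_iff.2 hzero
      filter_upwards [this] with ω h
      simp [h]
    have hnull : ℙ {ω | ¬ (∑ i, Z i ω = 0)} = 0 := ae_iff.1 hsum0
    have : ℙ {ω | ε ≤ ∑ i, Z i ω} = 0 := by
      refine measure_mono_null ?_ hnull
      intro ω hω
      simp only [Set.mem_setOf_eq] at *
      intro h0
      rw [h0] at hω; linarith
    rw [this]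
    exact zero_le'
  · -- V > 0
    set D : ℝ := 3*V + M*ε with hDdef
    have hD : 0 < D := by positivity
    set lam : ℝ := 3*ε/D with hlamdef
    have hlam : 0 < lam := by positivity
    have hlM : lam * M < 3 := by
      rw [hlamdef, div_mul_eq_mul_div, div_lt_iff₀ hD]
      rw [hDdef]; nlinarith
    have hc : 0 < 1 - lam*M/3 := by linarith
    -- integrability of exp(lam * sum)
    have hballe : ∀ᵐ ω ∂ℙ, ∀ i, |Z i ω| ≤ M := MeasureTheory.ae_all_iff.2 hb
    have hsumb : ∀ᵐ ω ∂ℙ, |∑ i, Z i ω| ≤ n * M := by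
      filter_upwards [hballe] with ω h
      calc |∑ i, Z i ω| ≤ ∑ i, |Z i ω| := Finset.abs_sum_le_sum_abs _ _
        _ ≤ ∑ _i : Fin n, M := Finset.sum_le_sum fun i _ => h i
        _ = n * M := by simp [mul_comm]
    have hmsum : Measurable (fun ω => ∑ i, Z i ω) := by
      apply Finset.measurable_sum
      exact fun i _ => hZmeas i
    have hexpint : Integrable (fun ω => Real.exp (lam * ∑ i, Z i ω)) ℙ := by
      refine Integrable.mono' (integrable_const (Real.exp (lam*(n*M))))
        ((hmsum.const_mul lam).exp).aestronglyMeasurable ?_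
      filter_upwards [hsumb] with ω h
      rw [Real.norm_eq_abs, abs_of_pos (Real.exp_pos _)]
      exact Real.exp_le_exp.2 (mul_le_mul_of_nonneg_left ((le_abs_self _).trans h) hlam.le)
    -- Chernoff
    have hcher := measure_ge_le_exp_mul_mgf (μ := ℙ) (X := fun ω => ∑ i, Z i ω)
      ε hlam.le hexpint
    -- mgf of the sum
    have hmgfsum : mgf (fun ω => ∑ i, Z i ω) ℙ lam = ∏ i, mgf (Z i) ℙ lam := by
      have : (fun ω => ∑ i, Z i ω) = ∑ i, Z i := by
        ext ω; simp
      rw [this, hZindep.mgf_sum hZmeas]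
    have hmgfprod : ∏ i, mgf (Z i) ℙ lam
        ≤ Real.exp (lam^2 * V / (2*(1 - lam*M/3))) := by
      calc ∏ i, mgf (Z i) ℙ lam
          ≤ ∏ i, Real.exp (lam^2 * (∫ ω, (Z i ω)^2 ∂ℙ) / (2*(1 - lam*M/3))) := by
            apply Finset.prod_le_prod (fun i _ => mgf_nonneg)
            intro i _
            exact aux_mgf_bound (Z i) (hZmeas i) M lam hM.le (hb i) (hmean i) hlam.le hlM
        _ = Real.exp (∑ i, lam^2 * (∫ ω, (Z i ω)^2 ∂ℙ) / (2*(1 - lam*M/3))) := by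
            rw [Real.exp_sum]
        _ ≤ Real.exp (lam^2 * V / (2*(1 - lam*M/3))) := by
            apply Real.exp_le_exp.2
            rw [← Finset.sum_div, ← Finset.mul_sum]
            apply div_le_div_of_nonneg_right ?_ (by linarith)
            exact mul_le_mul_of_nonneg_left hvar (by positivity)
    -- put together
    have hfinal : (ℙ {ω | ε ≤ ∑ i, Z i ω}).toReal
        ≤ Real.exp (-(ε^2) / (2*V + (2/3)*M*ε)) := by
      refine hcher.trans ?_
      rw [hmgfsum]
      calc Real.exp (-lam * ε) * ∏ i, mgf (Z i) ℙ lam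
          ≤ Real.exp (-lam * ε) * Real.exp (lam^2 * V / (2*(1 - lam*M/3))) := by
            apply mul_le_mul_of_nonneg_left hmgfprod (le_of_lt (Real.exp_pos _))
        _ = Real.exp (-lam * ε + lam^2 * V / (2*(1 - lam*M/3))) := (Real.exp_add _ _).symm
        _ = Real.exp (-(ε^2) / (2*V + (2/3)*M*ε)) := by
            congr 1
            have h1 : 1 - lam*M/3 = 3*V/D := by
              rw [hlamdef, hDdef]; field_simp; ring
            rw [h1, hlamdef]
            have hV' : (V:ℝ) ≠ 0 := ne_of_gt hVpos
            have hD' : D ≠ 0 := ne_of_gt hD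
            have h2 : 2*V + (2/3)*M*ε ≠ 0 := by rw [hDdef] at *; positivity
            field_simp
            rw [hDdef]; ring
    rw [← ENNReal.ofReal_toReal (measure_ne_top ℙ _)]
    exact ENNReal.ofReal_le_ofReal hfinal

lemma aux_grad_ineq {d : ℕ} (f : EuclideanSpace ℝ (Fin d) → ℝ)
    (hconv : ConvexOn ℝ Set.univ f) (hdiff : Differentiable ℝ f)
    (x y : EuclideanSpace ℝ (Fin d)) :
    f x + inner ℝ (gradient f x) (y - x) ≤ f y := by
  set g : ℝ → ℝ := fun θ => f (θ • (y - x) + x) with hg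
  have hgconv : ConvexOn ℝ Set.univ g := by
    have h := hconv.comp_affineMap (AffineMap.lineMap x y)
    have heq : f ∘ ⇑(AffineMap.lineMap x y) = g := by
      funext θ
      simp [hg, AffineMap.lineMap_apply, Function.comp]
    rw [heq] at h
    simpa using h
  have hline : HasDerivAt (fun θ : ℝ => θ • (y - x) + x) (y - x) 0 := by
    simpa using ((hasDerivAt_id (0:ℝ)).smul_const (y - x)).add_const x
  have hgderiv : HasDerivAt g (inner ℝ (gradient f x) (y - x) : ℝ) 0 := by
    have hf : HasFDerivAt f (InnerProductSpace.toDual ℝ _ (gradient f x)) x :=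
      ((hdiff x).hasGradientAt).hasFDerivAt
    have hf' : HasFDerivAt f (InnerProductSpace.toDual ℝ _ (gradient f x))
        ((fun θ : ℝ => θ • (y - x) + x) 0) := by simpa using hf
    have := hf'.comp_hasDerivAt 0 hline
    simpa [InnerProductSpace.toDual_apply_apply, hg, Function.comp_def] using this
  have hslope := hgconv.le_slope_of_hasDerivAt (Set.mem_univ (0:ℝ))
    (Set.mem_univ (1:ℝ)) zero_lt_one hgderiv
  have hs : slope g 0 1 = g 1 - g 0 := by
    rw [slope_def_field]; simp
  rw [hs] at hslope
  have hg1 : g 1 = f y := by simp [hg]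
  have hg0 : g 0 = f x := by simp [hg]
  rw [hg1, hg0] at hslope
  linarith

lemma aux_tele (T : ℕ) (hT : 1 ≤ T) (a D : ℕ → ℝ) (B : ℝ)
    (hmono : ∀ t, a t ≤ a (t+1)) (ha : ∀ t, 0 ≤ a t) (hD : ∀ t, 0 ≤ D t)
    (hDb : ∀ t, 1 ≤ t → t ≤ T+1 → D t ≤ B) :
    ∑ t ∈ Finset.Icc 1 T, a t * (D t - D (t+1)) ≤ a T * B - a T * D (T+1) := by
  induction T with
  | zero => omega
  | succ n ih =>
    rcases Nat.eq_or_lt_of_le hT with h | h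
    · simp [← h]
      nlinarith [hDb 1 (by omega) (by omega), ha 1, hD 2]
    · have hn : 1 ≤ n := by omega
      have ihn := ih hn (fun t h1 h2 => hDb t h1 (by omega))
      rw [Finset.sum_Icc_succ_top (by omega : 1 ≤ n + 1)]
      nlinarith [hmono n, hDb (n+1) (by omega) (by omega), hD (n+1), hD (n+2), ha (n+1)]

lemma aux_reindex (T : ℕ) (g : ℕ → ℝ) :
    ∑ i ∈ Finset.range T, g (i+1) = ∑ t ∈ Finset.Icc 1 T, g t := by
  induction T with
  | zero => simp
  | succ n ih => rw [Finset.sum_range_succ, ih, Finset.sum_Icc_succ_top (by omega)]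


end AuxSSP

set_option maxHeartbeats 2000000 in
/-- Theorem 5 (SGD under SSP, convergence in probability):
exponential tail bound on the regret of the noisy views. -/
theorem stmt_9 (d T : ℕ) (hd : 1 ≤ d) (hT : 1 ≤ T)
    (η L F : ℝ) (hη : 0 < η) (hL : 0 ≤ L) (hF : 0 ≤ F)
    (P s : ℕ) (hP : 1 ≤ P)
    (xstar : EuclideanSpace ℝ (Fin d))
    {Ω : Type*} [MeasureSpace Ω] [IsProbabilityMeasure (ℙ : Measure Ω)]
    (γ : ℕ → Ω → ℝ) (hmeas : ∀ t ∈ Finset.Icc 1 T, Measurable (γ t))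
    (hindep : iIndepFun (fun i : Fin T => γ ((i:ℕ)+1)) ℙ)
    (hident : ∀ t ∈ Finset.Icc 1 T, ∀ t' ∈ Finset.Icc 1 T,
      IdentDistrib (γ t) (γ t') ℙ ℙ)
    (hbound : ∀ t ∈ Finset.Icc 1 T,
      ∀ᵐ ω ∂ℙ, γ t ω ∈ Set.Icc (0:ℝ) ((2*(s:ℝ)+1)*(P:ℝ)))
    (μγ σγ : ℝ)
    (hmean : ∀ t ∈ Finset.Icc 1 T, ∫ ω, γ t ω ∂ℙ = μγ)
    (hvar : ∀ t ∈ Finset.Icc 1 T, variance (γ t) ℙ = σγ)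
    (f : ℕ → EuclideanSpace ℝ (Fin d) → ℝ)
    (hconv : ∀ t ∈ Finset.Icc 1 T, ConvexOn ℝ Set.univ (f t))
    (hdiff : ∀ t ∈ Finset.Icc 1 T, Differentiable ℝ (f t))
    (hgrad : ∀ t ∈ Finset.Icc 1 T, ∀ x, ‖gradient (f t) x‖ ≤ L)
    (x xtilde : ℕ → Ω → EuclideanSpace ℝ (Fin d))
    (ubar : ℕ → Ω → ℝ) (c : ℕ → Ω → EuclideanSpace ℝ (Fin d))
    (hrec : ∀ t ∈ Finset.Icc 1 T, ∀ ω,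
      x (t+1) ω = x t ω - (η / Real.sqrt t) • gradient (f t) (xtilde t ω))
    (hub : ∀ t ∈ Finset.Icc 1 T, ∀ ω, 0 ≤ ubar t ω ∧ ubar t ω ≤ η * L / Real.sqrt t)
    (hdecomp : ∀ t ∈ Finset.Icc 1 T, ∀ ω, xtilde t ω = x t ω + ubar t ω • c t ω)
    (hc : ∀ t ∈ Finset.Icc 1 T, ∀ᵐ ω ∂ℙ, ‖c t ω‖ ≤ γ t ω)
    (hdiam : ∀ t ∈ Finset.Icc 1 (T+1), ∀ᵐ ω ∂ℙ, (1/2) * ‖xstar - x t ω‖^2 ≤ F^2)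
    (τ : ℝ) (hτ : 0 < τ) :
    ℙ {ω | τ ≤ (∑ t ∈ Finset.Icc 1 T, (f t (xtilde t ω) - f t xstar)) / (T:ℝ)
            - (1 / Real.sqrt T) * (η * L^2 + F^2 / η + 2 * η * L^2 * μγ)}
      ≤ ENNReal.ofReal (Real.exp (-(T:ℝ) * τ^2 /
          (2 * (η^2 * L^4 * (Real.log T + 1) / T) * σγ
            + (2/3) * η * L^2 * ((2*(s:ℝ)+1)*(P:ℝ)) * τ))) := by
  classical
  set b : ℝ := (2*(s:ℝ)+1)*(P:ℝ) with hbdef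
  have hP1 : (1:ℝ) ≤ (P:ℝ) := by exact_mod_cast hP
  have hs0 : (0:ℝ) ≤ (s:ℝ) := Nat.cast_nonneg s
  have hbpos : 0 < b := by rw [hbdef]; nlinarith
  rcases hL.eq_or_lt with hL0 | hLpos
  · -- degenerate case L = 0
    rw [← hL0]
    norm_num
    exact prob_le_one
  -- main case
  have hT0 : (0:ℝ) < T := by exact_mod_cast hT
  have hsT : 0 < Real.sqrt T := Real.sqrt_pos.2 hT0
  have hTs : Real.sqrt T * Real.sqrt T = (T:ℝ) := Real.mul_self_sqrt hT0.le
  have h1T : (1:ℕ) ∈ Finset.Icc 1 T := Finset.mem_Icc.2 ⟨le_refl _, hT⟩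
  have hγb : ∀ t ∈ Finset.Icc 1 T, ∀ᵐ ω ∂ℙ, |γ t ω| ≤ b := by
    intro t ht; filter_upwards [hbound t ht] with ω hω
    rw [abs_le]; exact ⟨by linarith [hω.1], by linarith [hω.2]⟩
  have hγint : ∀ t ∈ Finset.Icc 1 T, Integrable (γ t) ℙ := by
    intro t ht
    refine Integrable.mono' (integrable_const b) (hmeas t ht).aestronglyMeasurable ?_
    filter_upwards [hγb t ht] with ω h using by simpa using h
  have hμ0 : 0 ≤ μγ := by
    rw [← hmean 1 h1T]
    apply integral_nonneg_of_ae
    filter_upwards [hbound 1 h1T] with ω h using h.1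
  have hμb : μγ ≤ b := by
    rw [← hmean 1 h1T]
    calc ∫ ω, γ 1 ω ∂ℙ ≤ ∫ _ω, b ∂ℙ := by
          refine integral_mono_ae (hγint 1 h1T) (integrable_const b) ?_
          filter_upwards [hbound 1 h1T] with ω h using h.2
      _ = b := by simp
  have hσ0 : 0 ≤ σγ := by rw [← hvar 1 h1T]; exact variance_nonneg _ _
  have hlogT : 0 ≤ Real.log T := Real.log_nonneg (by exact_mod_cast hT)
  have hsqint : ∀ t ∈ Finset.Icc 1 T, Integrable (fun ω => (γ t ω)^2) ℙ := by
    intro t ht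
    refine Integrable.mono' (integrable_const (b^2))
      (((hmeas t ht).pow_const 2).aestronglyMeasurable) ?_
    filter_upwards [hγb t ht] with ω h
    have habs : |(γ t ω)^2| = |γ t ω|^2 := by rw [abs_pow, sq_abs, ← sq_abs]
    rw [Real.norm_eq_abs, habs]
    exact pow_le_pow_left₀ (abs_nonneg _) h 2
  have hcm : ∀ t ∈ Finset.Icc 1 T, ∫ ω, (γ t ω - μγ)^2 ∂ℙ = σγ := by
    intro t ht
    have hml2 : MemLp (γ t) 2 ℙ :=
      (memLp_top_of_bound (hmeas t ht).aestronglyMeasurable b (hγb t ht)).mono_exponent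
        le_top
    have hvd := variance_eq_sub hml2
    rw [hvar t ht] at hvd
    simp only [Pi.pow_apply] at hvd
    rw [hmean t ht] at hvd
    have hexp2 : (fun ω => (γ t ω - μγ)^2)
        = fun ω => ((γ t ω)^2 - (2*μγ)*(γ t ω)) + μγ^2 := by funext ω; ring
    have hi1 : Integrable (fun ω => (γ t ω)^2 - (2*μγ)*(γ t ω)) ℙ :=
      (hsqint t ht).sub ((hγint t ht).const_mul (2*μγ))
    rw [hexp2, integral_add hi1 (integrable_const _),
      integral_sub (hsqint t ht) ((hγint t ht).const_mul (2*μγ)),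
      integral_const_mul, hmean t ht, integral_const]
    simp only [measure_univ, ENNReal.toReal_one, smul_eq_mul, one_mul, probReal_univ]
    nlinarith [hvd]
  -- the centered scaled variables
  set M : ℝ := η * L^2 * b with hMdef
  have hMpos : 0 < M := by
    rw [hMdef]; exact mul_pos (mul_pos hη (pow_pos hLpos 2)) hbpos
  set V : ℝ := η^2 * L^4 * (Real.log T + 1) * σγ with hVdef
  have hV0 : 0 ≤ V := by
    rw [hVdef]
    exact mul_nonneg (mul_nonneg (by positivity) (by linarith)) hσ0
  set Z : Fin T → Ω → ℝ :=
    fun i ω => (η * L^2 / Real.sqrt ((((i:ℕ)+1 : ℕ)):ℝ)) * (γ ((i:ℕ)+1) ω - μγ) with hZdef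
  have hmemi : ∀ i : Fin T, ((i:ℕ)+1) ∈ Finset.Icc 1 T :=
    fun i => Finset.mem_Icc.2 ⟨Nat.le_add_left 1 _, i.isLt⟩
  have hsq1 : ∀ i : Fin T, 1 ≤ Real.sqrt ((((i:ℕ)+1 : ℕ)):ℝ) := by
    intro i
    have h1 : (1:ℝ) ≤ ((((i:ℕ)+1 : ℕ)):ℝ) := by exact_mod_cast Nat.le_add_left 1 (i:ℕ)
    nlinarith [Real.sq_sqrt (le_trans zero_le_one h1),
      Real.sqrt_nonneg ((((i:ℕ)+1 : ℕ)):ℝ)]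
  have hZmeas : ∀ i, Measurable (Z i) :=
    fun i => ((hmeas _ (hmemi i)).sub measurable_const).const_mul _
  have hZindep : iIndepFun Z ℙ := by
    have h := hindep.comp
      (fun i (y : ℝ) => (η * L^2 / Real.sqrt ((((i:ℕ)+1 : ℕ)):ℝ)) * (y - μγ))
      (fun i => (measurable_id.sub_const μγ).const_mul _)
    exact h
  have hZmean : ∀ i, ∫ ω, Z i ω ∂ℙ = 0 := by
    intro i
    show ∫ ω, (η * L^2 / Real.sqrt ((((i:ℕ)+1 : ℕ)):ℝ)) * (γ ((i:ℕ)+1) ω - μγ) ∂ℙ = 0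
    rw [integral_const_mul, integral_sub (hγint _ (hmemi i)) (integrable_const _),
      hmean _ (hmemi i), integral_const]
    simp
  have hZb : ∀ i, ∀ᵐ ω ∂ℙ, |Z i ω| ≤ M := by
    intro i
    filter_upwards [hbound _ (hmemi i)] with ω hω
    have h1 : |γ ((i:ℕ)+1) ω - μγ| ≤ b := by
      rw [abs_le]; exact ⟨by linarith [hω.1], by linarith [hω.2]⟩
    have hsqpos : (0:ℝ) < Real.sqrt ((((i:ℕ)+1 : ℕ)):ℝ) := lt_of_lt_of_le one_pos (hsq1 i)
    have hc0 : 0 < η * L^2 / Real.sqrt ((((i:ℕ)+1 : ℕ)):ℝ) :=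
      div_pos (mul_pos hη (pow_pos hLpos 2)) hsqpos
    show |(η * L^2 / Real.sqrt ((((i:ℕ)+1 : ℕ)):ℝ)) * (γ ((i:ℕ)+1) ω - μγ)| ≤ M
    rw [abs_mul, abs_of_pos hc0]
    have hcle : η * L^2 / Real.sqrt ((((i:ℕ)+1 : ℕ)):ℝ) ≤ η * L^2 := by
      rw [div_le_iff₀ hsqpos]
      nlinarith [hsq1 i, mul_pos hη (pow_pos hLpos 2)]
    calc (η * L^2 / Real.sqrt ((((i:ℕ)+1 : ℕ)):ℝ)) * |γ ((i:ℕ)+1) ω - μγ|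
        ≤ (η * L^2) * b := mul_le_mul hcle h1 (abs_nonneg _) (by positivity)
      _ = M := by rw [hMdef]
  have hZvar : ∑ i, ∫ ω, (Z i ω)^2 ∂ℙ ≤ V := by
    have heach : ∀ i : Fin T,
        ∫ ω, (Z i ω)^2 ∂ℙ = (η^2*L^4*σγ) * (1/((((i:ℕ)+1 : ℕ)):ℝ)) := by
      intro i
      have hrw : (fun ω => (Z i ω)^2)
          = fun ω => (η * L^2 / Real.sqrt ((((i:ℕ)+1 : ℕ)):ℝ))^2 * (γ ((i:ℕ)+1) ω - μγ)^2 := by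
        funext ω
        show ((η * L^2 / Real.sqrt ((((i:ℕ)+1 : ℕ)):ℝ)) * (γ ((i:ℕ)+1) ω - μγ))^2 = _
        ring
      rw [hrw, integral_const_mul, hcm _ (hmemi i)]
      have hsq : (Real.sqrt ((((i:ℕ)+1 : ℕ)):ℝ))^2 = ((((i:ℕ)+1 : ℕ)):ℝ) :=
        Real.sq_sqrt (by positivity)
      rw [div_pow, mul_pow, hsq]
      ring
    rw [Finset.sum_congr rfl (fun i _ => heach i), ← Finset.mul_sum]
    have hreind : ∑ i : Fin T, 1/((((i:ℕ)+1 : ℕ)):ℝ) = ∑ t ∈ Finset.Icc 1 T, 1/(t:ℝ) := by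
      rw [Fin.sum_univ_eq_sum_range (fun j => 1/(((j+1 : ℕ)):ℝ)) T,
        aux_reindex T (fun t => 1/((t:ℕ):ℝ))]
    rw [hreind]
    calc (η^2*L^4*σγ) * ∑ t ∈ Finset.Icc 1 T, 1/(t:ℝ)
        ≤ (η^2*L^4*σγ) * (Real.log T + 1) :=
          mul_le_mul_of_nonneg_left (aux_sum_inv T hT) (mul_nonneg (by positivity) hσ0)
      _ = V := by rw [hVdef]; ring
  -- Bernstein
  have hbern := aux_bernstein Z hZmeas hZindep M V ((T:ℝ)*τ) hMpos (by positivity) hV0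
    hZb hZmean hZvar
  -- a.e. facts bundled
  have hae1 : ∀ᵐ ω ∂ℙ, ∀ t ∈ Finset.Icc 1 T, γ t ω ∈ Set.Icc (0:ℝ) b :=
    (Filter.eventually_all_finset _).2 hbound
  have hae2 : ∀ᵐ ω ∂ℙ, ∀ t ∈ Finset.Icc 1 T, ‖c t ω‖ ≤ γ t ω :=
    (Filter.eventually_all_finset _).2 hc
  have hae3 : ∀ᵐ ω ∂ℙ, ∀ t ∈ Finset.Icc 1 (T+1), (1/2) * ‖xstar - x t ω‖^2 ≤ F^2 :=
    (Filter.eventually_all_finset _).2 hdiam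
  have hmono : ℙ {ω | τ ≤ (∑ t ∈ Finset.Icc 1 T, (f t (xtilde t ω) - f t xstar)) / (T:ℝ)
        - (1 / Real.sqrt T) * (η * L^2 + F^2 / η + 2 * η * L^2 * μγ)}
      ≤ ℙ {ω | (T:ℝ)*τ ≤ ∑ i, Z i ω} := by
    apply measure_mono_ae
    filter_upwards [hae1, hae2, hae3] with ω hg1 hg2 hg3
    intro hE
    show (T:ℝ)*τ ≤ ∑ i, Z i ω
    -- per-step deterministic bound
    have hstep : ∀ t ∈ Finset.Icc 1 T,
        f t (xtilde t ω) - f t xstar ≤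
          Real.sqrt t/(2*η) * (‖x t ω - xstar‖^2 - ‖x (t+1) ω - xstar‖^2)
          + η*L^2/(2*Real.sqrt t) + (η*L^2/Real.sqrt t) * γ t ω := by
      intro t ht
      obtain ⟨ht1, htT⟩ := Finset.mem_Icc.1 ht
      have htR : (1:ℝ) ≤ (t:ℝ) := by exact_mod_cast ht1
      have hst : (0:ℝ) < Real.sqrt t := Real.sqrt_pos.2 (by linarith)
      set g := gradient (f t) (xtilde t ω) with hgdef
      have hA := aux_grad_ineq (f t) (hconv t ht) (hdiff t ht) (xtilde t ω) xstar
      rw [← hgdef] at hA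
      have hBdec : xtilde t ω - xstar = (x t ω - xstar) + ubar t ω • c t ω := by
        rw [hdecomp t ht ω]; abel
      have hsplit : (inner ℝ g (xtilde t ω - xstar) : ℝ)
          = inner ℝ g (x t ω - xstar) + ubar t ω * inner ℝ g (c t ω) := by
        rw [hBdec, inner_add_right, real_inner_smul_right]
      have hA' : f t (xtilde t ω) - f t xstar ≤ (inner ℝ g (xtilde t ω - xstar) : ℝ) := by
        have hneg : (inner ℝ g (xstar - xtilde t ω) : ℝ)
            = - inner ℝ g (xtilde t ω - xstar) := by
          rw [← inner_neg_right]; congr 1; abel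
        rw [hneg] at hA
        linarith
      have hγ0 : 0 ≤ γ t ω := (hg1 t ht).1
      obtain ⟨hub0, hub1⟩ := hub t ht ω
      have hgL : ‖g‖ ≤ L := by rw [hgdef]; exact hgrad t ht _
      have hic : (inner ℝ g (c t ω) : ℝ) ≤ L * γ t ω := by
        calc (inner ℝ g (c t ω) : ℝ) ≤ ‖g‖ * ‖c t ω‖ := real_inner_le_norm _ _
          _ ≤ L * γ t ω := mul_le_mul hgL (hg2 t ht) (norm_nonneg _) hL
      have hC : ubar t ω * inner ℝ g (c t ω) ≤ (η*L^2/Real.sqrt t) * γ t ω := by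
        have e1 : ubar t ω * inner ℝ g (c t ω) ≤ ubar t ω * (L * γ t ω) :=
          mul_le_mul_of_nonneg_left hic hub0
        have e2 : ubar t ω * (L * γ t ω) ≤ (η*L/Real.sqrt t) * (L * γ t ω) :=
          mul_le_mul_of_nonneg_right hub1 (mul_nonneg hL hγ0)
        have e3 : (η*L/Real.sqrt t) * (L * γ t ω) = (η*L^2/Real.sqrt t) * γ t ω := by ring
        linarith
      have hrec' := hrec t ht ω
      have hd : x (t+1) ω - xstar = (x t ω - xstar) - (η/Real.sqrt t) • g := by
        rw [hrec', ← hgdef]; abel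
      have hnormexp : ‖x (t+1) ω - xstar‖^2
          = ‖x t ω - xstar‖^2 - 2*((η/Real.sqrt t) * inner ℝ (x t ω - xstar) g)
            + (η/Real.sqrt t)^2 * ‖g‖^2 := by
        rw [hd, norm_sub_sq_real, real_inner_smul_right, norm_smul, Real.norm_eq_abs,
          abs_of_pos (div_pos hη hst), mul_pow]
      have hgn : ‖g‖^2 ≤ L^2 := by nlinarith [hgL, norm_nonneg g]
      have hkey : (inner ℝ (x t ω - xstar) g : ℝ)
          = Real.sqrt t/(2*η) * (‖x t ω - xstar‖^2 - ‖x (t+1) ω - xstar‖^2)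
            + (η/(2*Real.sqrt t)) * ‖g‖^2 := by
        have h2 : 2*((η/Real.sqrt t) * inner ℝ (x t ω - xstar) g)
            = ‖x t ω - xstar‖^2 - ‖x (t+1) ω - xstar‖^2 + (η/Real.sqrt t)^2*‖g‖^2 := by
          linarith [hnormexp]
        have hstne : Real.sqrt t ≠ 0 := ne_of_gt hst
        have hηne : η ≠ 0 := ne_of_gt hη
        have hIval : (inner ℝ (x t ω - xstar) g : ℝ)
            = (‖x t ω - xstar‖^2 - ‖x (t+1) ω - xstar‖^2 + (η/Real.sqrt t)^2*‖g‖^2)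
              / (2*(η/Real.sqrt t)) := by
          rw [eq_div_iff (ne_of_gt (mul_pos two_pos (div_pos hη hst)))]
          linear_combination h2
        rw [hIval]
        field_simp
      have hIc : (inner ℝ g (x t ω - xstar) : ℝ) = inner ℝ (x t ω - xstar) g :=
        real_inner_comm _ _
      have hη2 : 0 ≤ η/(2*Real.sqrt t) := le_of_lt (div_pos hη (by linarith))
      have hGL : (η/(2*Real.sqrt t)) * ‖g‖^2 ≤ (η/(2*Real.sqrt t)) * L^2 :=
        mul_le_mul_of_nonneg_left hgn hη2
      have hfin : (η/(2*Real.sqrt t)) * L^2 = η*L^2/(2*Real.sqrt t) := by ring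
      linarith [hA', hsplit, hC, hkey, hIc, hGL, hfin]
    -- sum the bound
    have hsum1 := Finset.sum_le_sum hstep
    rw [Finset.sum_add_distrib, Finset.sum_add_distrib] at hsum1
    have hS1 : ∑ t ∈ Finset.Icc 1 T,
        Real.sqrt t/(2*η) * (‖x t ω - xstar‖^2 - ‖x (t+1) ω - xstar‖^2)
        ≤ Real.sqrt T * F^2/η := by
      have htele := aux_tele T hT (fun n => Real.sqrt n/(2*η)) (fun n => ‖x n ω - xstar‖^2)
        (2*F^2) ?_ ?_ ?_ ?_
      · have h0 : 0 ≤ Real.sqrt T/(2*η) * ‖x (T+1) ω - xstar‖^2 :=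
          mul_nonneg (div_nonneg (Real.sqrt_nonneg _) (by linarith)) (sq_nonneg _)
        have heq : Real.sqrt T/(2*η)*(2*F^2) = Real.sqrt T * F^2/η := by
          field_simp
        linarith [htele]
      · intro n
        exact (div_le_div_iff_of_pos_right (by linarith : (0:ℝ) < 2*η)).2
          (Real.sqrt_le_sqrt (by push_cast; linarith))
      · intro n
        exact div_nonneg (Real.sqrt_nonneg _) (by linarith)
      · intro n
        exact sq_nonneg _
      · intro n h1 h2
        have := hg3 n (Finset.mem_Icc.2 ⟨h1, h2⟩)
        rw [norm_sub_rev] at this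
        show ‖x n ω - xstar‖^2 ≤ 2*F^2
        linarith
    have hS2 : ∑ t ∈ Finset.Icc 1 T, η*L^2/(2*Real.sqrt t)
        ≤ η*L^2*Real.sqrt T := by
      have hterm : ∀ t ∈ Finset.Icc 1 T,
          η*L^2/(2*Real.sqrt t) = (η*L^2/2) * (1/Real.sqrt t) := fun t _ => by ring
      rw [Finset.sum_congr rfl hterm, ← Finset.mul_sum]
      have hcn : (0:ℝ) ≤ η*L^2/2 :=
        div_nonneg (mul_nonneg hη.le (sq_nonneg L)) (by norm_num)
      calc (η*L^2/2) * ∑ t ∈ Finset.Icc 1 T, 1/Real.sqrt t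
          ≤ (η*L^2/2) * (2*Real.sqrt T) :=
            mul_le_mul_of_nonneg_left (aux_sum_inv_sqrt T) hcn
        _ = η*L^2*Real.sqrt T := by ring
    have hS3 : ∑ t ∈ Finset.Icc 1 T, (η*L^2/Real.sqrt t) * γ t ω
        ≤ 2*η*L^2*μγ*Real.sqrt T + ∑ i, Z i ω := by
      have hterm : ∀ t ∈ Finset.Icc 1 T,
          (η*L^2/Real.sqrt t) * γ t ω
            = (η*L^2*μγ)*(1/Real.sqrt t) + (η*L^2/Real.sqrt t)*(γ t ω - μγ) :=
        fun t _ => by ring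
      rw [Finset.sum_congr rfl hterm, Finset.sum_add_distrib, ← Finset.mul_sum]
      have hp1 : (η*L^2*μγ) * (∑ t ∈ Finset.Icc 1 T, 1/Real.sqrt t)
          ≤ 2*η*L^2*μγ*Real.sqrt T := by
        calc (η*L^2*μγ) * (∑ t ∈ Finset.Icc 1 T, 1/Real.sqrt t)
            ≤ (η*L^2*μγ)*(2*Real.sqrt T) :=
              mul_le_mul_of_nonneg_left (aux_sum_inv_sqrt T)
                (mul_nonneg (mul_nonneg hη.le (sq_nonneg L)) hμ0)
          _ = 2*η*L^2*μγ*Real.sqrt T := by ring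
      have hp2 : ∑ i, Z i ω
          = ∑ t ∈ Finset.Icc 1 T, (η*L^2/Real.sqrt t)*(γ t ω - μγ) := by
        have e1 : ∑ i, Z i ω
            = ∑ j ∈ Finset.range T, (η*L^2/Real.sqrt (((j+1 : ℕ)):ℝ))*(γ (j+1) ω - μγ) := by
          show ∑ i : Fin T, (η * L^2 / Real.sqrt ((((i:ℕ)+1 : ℕ)):ℝ)) * (γ ((i:ℕ)+1) ω - μγ) = _
          exact Fin.sum_univ_eq_sum_range
            (fun j => (η*L^2/Real.sqrt (((j+1:ℕ)):ℝ))*(γ (j+1) ω - μγ)) T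
        rw [e1, aux_reindex T (fun t => (η*L^2/Real.sqrt ((t:ℕ):ℝ))*(γ t ω - μγ))]
      linarith [hp1, le_of_eq hp2, le_of_eq hp2.symm]
    -- event arithmetic
    have hTR : (T:ℝ)*((∑ t ∈ Finset.Icc 1 T, (f t (xtilde t ω) - f t xstar))/(T:ℝ))
        = ∑ t ∈ Finset.Icc 1 T, (f t (xtilde t ω) - f t xstar) := by
      field_simp
    have hTs' : (T:ℝ)*(1/Real.sqrt T) = Real.sqrt T := by
      rw [← hTs]; field_simp; rw [Real.sqrt_sq hsT.le]
    have hE2 := mul_le_mul_of_nonneg_left hE hT0.le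
    rw [mul_sub, hTR, ← mul_assoc, hTs'] at hE2
    have hCexp : Real.sqrt T*(η*L^2 + F^2/η + 2*η*L^2*μγ)
        = η*L^2*Real.sqrt T + Real.sqrt T*F^2/η + 2*η*L^2*μγ*Real.sqrt T := by ring
    linarith [hE2, hsum1, hS1, hS2, hS3, hCexp]
  refine hmono.trans (hbern.trans (le_of_eq ?_))
  congr 1
  congr 1
  have hden1 : (0:ℝ) < 2*V + (2/3)*M*((T:ℝ)*τ) := by
    have : (0:ℝ) < (2/3)*M*((T:ℝ)*τ) := by positivity
    linarith
  have hden2 : (0:ℝ) < 2 * (η^2 * L^4 * (Real.log T + 1) / T) * σγ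
      + (2/3) * η * L^2 * b * τ := by
    have h1 : (0:ℝ) ≤ 2 * (η^2 * L^4 * (Real.log T + 1) / T) * σγ := by
      apply mul_nonneg _ hσ0
      positivity
    have h2 : (0:ℝ) < (2/3) * η * L^2 * b * τ := by positivity
    linarith
  rw [hVdef, hMdef]
  rw [div_eq_div_iff (by rw [hVdef, hMdef] at hden1; exact ne_of_gt hden1) (ne_of_gt hden2)]
  field_simp
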